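/- For all natural numbers n and s, Σ_{m=1}^{n} Σ_{q=1}^{min(m,s)} C(s,q) · E_q(m) = C(s+⌊n/2⌋, s) − 1 (an identity of integers), where E_q(m) denotes the number of ordered q-tuples (n₁,…,n_q) of positive even integers with n₁+⋯+n_q = m. -/

import Mathlib

open Finset

/-- Recursion for the cardinality of `antidiagonalTuple`. -/
lemma adt_succ_card (q r : ℕ) :
    (Finset.Nat.antidiagonalTuple (q + 1) r).card
      = ∑ j ∈ Finset.range (r + 1), (Finset.Nat.antidiagonalTuple q j).card := by
  have key : (Finset.Nat.antidiagonalTuple (q + 1) r).card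
      = ∑ ab ∈ Finset.HasAntidiagonal.antidiagonal r, (Finset.Nat.antidiagonalTuple q ab.2).card := by
    rw [← Finset.card_sigma]
    apply Finset.card_bij' (fun f _ => (⟨(f 0, r - f 0), Fin.tail f⟩ :
        (_ : ℕ × ℕ) × (Fin q → ℕ))) (fun x _ => Fin.cons x.1.1 x.2)
    · intro f hf
      exact Fin.cons_self_tail f
    · rintro ⟨⟨a, b⟩, g⟩ hx
      simp only [Finset.mem_sigma, Finset.HasAntidiagonal.mem_antidiagonal,
        Finset.Nat.mem_antidiagonalTuple] at hx
      have h1 : a + b = r := hx.1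
      refine Sigma.ext ?_ ?_
      · simp only [Fin.cons_zero]
        have : r - a = b := by omega
        rw [this]
      · simp [Fin.tail_cons]
    · intro f hf
      have hsum : ∑ i, f i = r := Finset.Nat.mem_antidiagonalTuple.mp hf
      rw [Fin.sum_univ_succ] at hsum
      simp only [Finset.mem_sigma, Finset.HasAntidiagonal.mem_antidiagonal,
        Finset.Nat.mem_antidiagonalTuple]
      refine ⟨by omega, ?_⟩
      show ∑ i : Fin q, f i.succ = r - f 0
      omega
    · rintro ⟨⟨a, b⟩, g⟩ hx
      simp only [Finset.mem_sigma, Finset.HasAntidiagonal.mem_antidiagonal,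
        Finset.Nat.mem_antidiagonalTuple] at hx ⊢
      rw [Fin.sum_univ_succ]
      simp only [Fin.cons_zero, Fin.cons_succ]
      have : ∑ i : Fin q, g i = b := hx.2
      omega
  rw [key, Finset.Nat.sum_antidiagonal_eq_sum_range_succ_mk]
  calc ∑ i ∈ Finset.range (r + 1), (Finset.Nat.antidiagonalTuple q (r - i)).card
      = ∑ i ∈ Finset.range (r + 1),
          (Finset.Nat.antidiagonalTuple q (r + 1 - 1 - i)).card := by
        apply Finset.sum_congr rfl; intro i _; congr 1
    _ = ∑ j ∈ Finset.range (r + 1), (Finset.Nat.antidiagonalTuple q j).card :=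
        Finset.sum_range_reflect (fun j => (Finset.Nat.antidiagonalTuple q j).card) (r + 1)

/-- Stars and bars for `antidiagonalTuple`. -/
lemma adt_card (q r : ℕ) :
    (Finset.Nat.antidiagonalTuple q r).card = Nat.multichoose q r := by
  induction q generalizing r with
  | zero =>
    cases r with
    | zero => simp
    | succ r => simp [Nat.multichoose_zero_succ]
  | succ q ih =>
    induction r with
    | zero => simp [Finset.Nat.antidiagonalTuple_zero_right, Nat.multichoose_zero_right]
    | succ r ihr =>
      rw [adt_succ_card, Finset.sum_range_succ, ← adt_succ_card, ihr,
        ih (r + 1), Nat.multichoose_succ_succ, Nat.add_comm]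

/-- No compositions of an odd number into even parts. -/
lemma E_odd (q m : ℕ) (hm : ¬ Even m) :
    ((Finset.Nat.antidiagonalTuple q m).filter
        (fun f => ∀ j, 0 < f j ∧ Even (f j))).card = 0 := by
  rw [Finset.card_eq_zero, Finset.filter_eq_empty_iff]
  intro f hf h
  apply hm
  rw [← Finset.Nat.mem_antidiagonalTuple.mp hf]
  exact Finset.even_sum _ fun j _ => (h j).2

/-- Number of compositions of `2k` into `q` positive even parts. -/
lemma E_even (q k : ℕ) (hq : 1 ≤ q) (hk : 1 ≤ k) :
    ((Finset.Nat.antidiagonalTuple q (2 * k)).filter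
        (fun f => ∀ j, 0 < f j ∧ Even (f j))).card = (k - 1).choose (q - 1) := by
  by_cases h : q ≤ k
  · have key : ((Finset.Nat.antidiagonalTuple q (2 * k)).filter
        (fun f => ∀ j, 0 < f j ∧ Even (f j))).card
          = (Finset.Nat.antidiagonalTuple q (k - q)).card := by
      apply Finset.card_bij' (fun f _ => fun j => f j / 2 - 1)
        (fun g _ => fun j => 2 * (g j + 1))
      · intro f hf
        rw [Finset.mem_filter] at hf
        funext j
        obtain ⟨c, hc⟩ := (hf.2 j).2
        have hpos := (hf.2 j).1
        show 2 * (f j / 2 - 1 + 1) = f j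
        omega
      · intro g hg
        funext j
        show 2 * (g j + 1) / 2 - 1 = g j
        omega
      · intro f hf
        rw [Finset.mem_filter] at hf
        obtain ⟨hf1, hf2⟩ := hf
        have hsum : ∑ i, f i = 2 * k := Finset.Nat.mem_antidiagonalTuple.mp hf1
        rw [Finset.Nat.mem_antidiagonalTuple]
        have heq : ∀ j, f j = 2 * (f j / 2 - 1) + 2 := by
          intro j
          obtain ⟨c, hc⟩ := (hf2 j).2
          have hpos := (hf2 j).1
          omega
        have h2 : ∑ i, f i = ∑ i : Fin q, (2 * (f i / 2 - 1) + 2) :=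
          Finset.sum_congr rfl fun i _ => heq i
        rw [h2, Finset.sum_add_distrib, ← Finset.mul_sum] at hsum
        simp only [Finset.sum_const, Finset.card_univ, Fintype.card_fin,
          smul_eq_mul] at hsum
        omega
      · intro g hg
        have hsum : ∑ i, g i = k - q := Finset.Nat.mem_antidiagonalTuple.mp hg
        rw [Finset.mem_filter]
        constructor
        · rw [Finset.Nat.mem_antidiagonalTuple]
          have e1 : ∑ i : Fin q, 2 * (g i + 1) = ∑ i : Fin q, (2 * g i + 2) :=
            Finset.sum_congr rfl fun i _ => by ring
          rw [e1, Finset.sum_add_distrib, ← Finset.mul_sum, hsum]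
          simp only [Finset.sum_const, Finset.card_univ, Fintype.card_fin,
            smul_eq_mul]
          omega
        · intro j
          constructor
          · show 0 < 2 * (g j + 1)
            omega
          · show Even (2 * (g j + 1))
            exact ⟨g j + 1, by ring⟩
    rw [key, adt_card, Nat.multichoose_eq]
    clear key
    have h1 : q + (k - q) - 1 = k - 1 := by omega
    rw [h1]
    have h2 : k - q = (k - 1) - (q - 1) := by omega
    rw [h2, Nat.choose_symm (by omega)]
  · push_neg at h
    rw [Nat.choose_eq_zero_of_lt (by omega)]
    rw [Finset.card_eq_zero, Finset.filter_eq_empty_iff]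
    intro f hf hcontra
    have hsum : ∑ i, f i = 2 * k := Finset.Nat.mem_antidiagonalTuple.mp hf
    have hge : ∀ j, 2 ≤ f j := by
      intro j
      obtain ⟨c, hc⟩ := (hcontra j).2
      have := (hcontra j).1
      omega
    have hle : (2 * q : ℕ) ≤ ∑ i, f i := by
      calc (2 * q : ℕ) = ∑ _i : Fin q, 2 := by simp [mul_comm]
        _ ≤ ∑ i, f i := Finset.sum_le_sum fun i _ => hge i
    omega

/-- The inner sum for an even index `2k`. -/
lemma inner_even (s k : ℕ) (hk : 1 ≤ k) :
    (∑ q ∈ Finset.Icc 1 (min (2 * k) s), Nat.choose s q * (k - 1).choose (q - 1))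
      = (s + k - 1).choose k := by
  have hsub1 : Finset.Icc 1 (min (2 * k) s) ⊆ Finset.Icc 1 (2 * k + s) :=
    Finset.Icc_subset_Icc_right (by omega)
  have hsub2 : Finset.Icc 1 k ⊆ Finset.Icc 1 (2 * k + s) :=
    Finset.Icc_subset_Icc_right (by omega)
  have e1 : (∑ q ∈ Finset.Icc 1 (min (2 * k) s),
        Nat.choose s q * (k - 1).choose (q - 1))
      = ∑ q ∈ Finset.Icc 1 (2 * k + s), Nat.choose s q * (k - 1).choose (q - 1) := by
    apply Finset.sum_subset hsub1
    intro q hq hq'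
    rw [Finset.mem_Icc] at hq hq'
    have hlt : min (2 * k) s < q := by omega
    rcases min_lt_iff.mp hlt with h1 | h1
    · rw [Nat.choose_eq_zero_of_lt (by omega : k - 1 < q - 1), Nat.mul_zero]
    · rw [Nat.choose_eq_zero_of_lt h1, Nat.zero_mul]
  have e2 : (∑ q ∈ Finset.Icc 1 k, Nat.choose s q * (k - 1).choose (q - 1))
      = ∑ q ∈ Finset.Icc 1 (2 * k + s), Nat.choose s q * (k - 1).choose (q - 1) := by
    apply Finset.sum_subset hsub2
    intro q hq hq'
    rw [Finset.mem_Icc] at hq hq'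
    have hkq : k < q := by omega
    rw [Nat.choose_eq_zero_of_lt (by omega : k - 1 < q - 1), Nat.mul_zero]
  rw [e1, ← e2]
  have hvan : Nat.add_choose_eq s (k - 1) k = Nat.add_choose_eq s (k - 1) k := rfl
  have key := Nat.add_choose_eq s (k - 1) k
  rw [Finset.Nat.sum_antidiagonal_eq_sum_range_succ_mk, Finset.sum_range_succ'] at key
  simp only [Nat.choose_zero_right, Nat.one_mul, Nat.sub_zero] at key
  rw [Nat.choose_eq_zero_of_lt (by omega : k - 1 < k)] at key
  have key2 : (s + (k - 1)).choose k
      = ∑ i ∈ Finset.range k, s.choose (i + 1) * (k - 1).choose i := by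
    rw [key, Nat.add_zero]
    apply Finset.sum_congr rfl
    intro i hi
    rw [Finset.mem_range] at hi
    congr 1
    rw [← Nat.choose_symm (by omega : i ≤ k - 1)]
    congr 1
    omega
  have e3 : (∑ q ∈ Finset.Icc 1 k, Nat.choose s q * (k - 1).choose (q - 1))
      = ∑ i ∈ Finset.range k, s.choose (i + 1) * (k - 1).choose i := by
    rw [← Finset.Ico_add_one_right_eq_Icc, Finset.sum_Ico_eq_sum_range]
    apply Finset.sum_congr (by congr 1)
    intro i _
    rw [Nat.add_comm 1 i, Nat.add_sub_cancel]
  rw [e3, ← key2]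
  congr 1
  omega

lemma pascal_aux (s k : ℕ) (hk : 1 ≤ k) :
    (s + k).choose s = (s + k - 1).choose s + (s + k - 1).choose k := by
  rcases Nat.eq_zero_or_pos s with rfl | hs
  · simp [Nat.choose_eq_zero_of_lt (by omega : k - 1 < k)]
  · obtain ⟨a, rfl⟩ : ∃ a, s = a + 1 := ⟨s - 1, by omega⟩
    rw [show a + 1 + k - 1 = a + k from by omega,
      show a + 1 + k = (a + k) + 1 from by omega, Nat.choose_succ_succ]
    have h3 : (a + k).choose a = (a + k).choose k := by
      rw [← Nat.choose_symm (by omega : a ≤ a + k)]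
      congr 1
      omega
    simp only [Nat.succ_eq_add_one]
    omega

theorem lemma_S5_sum (n s : ℕ) :
    (∑ m ∈ Finset.Icc 1 n, ∑ q ∈ Finset.Icc 1 (min m s),
        (Nat.choose s q : ℤ) *
          (((Finset.Nat.antidiagonalTuple q m).filter
              (fun f => ∀ j, 0 < f j ∧ Even (f j))).card : ℤ)) =
      (Nat.choose (s + n / 2) s : ℤ) - 1 := by
  induction n with
  | zero => simp
  | succ n ih =>
    rw [Finset.sum_Icc_succ_top (Nat.succ_le_succ (Nat.zero_le n)), ih]
    clear ih
    rcases Nat.even_or_odd (n + 1) with he | ho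
    · obtain ⟨k, hk2⟩ := he
      have hk1 : 1 ≤ k := by omega
      have hn1 : n + 1 = 2 * k := by omega
      rw [hn1]
      have hrw : ∀ q ∈ Finset.Icc 1 (min (2 * k) s),
          (Nat.choose s q : ℤ) *
            (((Finset.Nat.antidiagonalTuple q (2 * k)).filter
                (fun f => ∀ j, 0 < f j ∧ Even (f j))).card : ℤ)
            = (Nat.choose s q : ℤ) * ((k - 1).choose (q - 1) : ℤ) := by
        intro q hq
        rw [Finset.mem_Icc] at hq
        rw [E_even q k hq.1 hk1]
      rw [Finset.sum_congr rfl hrw]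
      clear hrw
      have h2 : (∑ q ∈ Finset.Icc 1 (min (2 * k) s),
            (Nat.choose s q : ℤ) * ((k - 1).choose (q - 1) : ℤ))
          = (((s + k - 1).choose k : ℕ) : ℤ) := by
        rw [← inner_even s k hk1]
        push_cast
        rfl
      rw [h2]
      have hn2 : n / 2 = k - 1 := by omega
      have hk3 : 2 * k / 2 = k := by omega
      rw [hn2, hk3]
      have h5 : s + (k - 1) = s + k - 1 := by omega
      rw [h5, pascal_aux s k hk1]
      push_cast
      ring
    · have hz : ∀ q ∈ Finset.Icc 1 (min (n + 1) s),
          (Nat.choose s q : ℤ) *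
            (((Finset.Nat.antidiagonalTuple q (n + 1)).filter
                (fun f => ∀ j, 0 < f j ∧ Even (f j))).card : ℤ) = 0 := by
        intro q _
        rw [E_odd q (n + 1) (Nat.not_even_iff_odd.mpr ho)]
        simp
      rw [Finset.sum_eq_zero hz]
      clear hz
      obtain ⟨t, ht⟩ := ho
      have : (n + 1) / 2 = n / 2 := by omega
      rw [this]
      ring
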